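/- arXiv:2102.00309 — 3 statements merged into one kernel-verified Lean document; each statement's English description precedes it below -/
import Mathlib

section
/- Let (a_n) be a sequence of real numbers with ∑ |a_n| < ∞ such that for every natural number k, |a_{2k-1} - a_{2k}| ≤ ∑_{n=k+1}^∞ |a_{2n-1} - a_{2n}|. Then there exists a sequence of signs (ε_i) ∈ {1,-1}^ℕ such that ε_{2k-1} + ε_{2k} = 0 for each k and ∑_{i=1}^∞ ε_i a_i = 0. -/
open Classical in
/-- Greedy partial sums: `SS b k` is the signed partial sum after `k` steps. -/
noncomputable def SS (b : ℕ → ℝ) : ℕ → ℝ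
  | 0 => 0
  | k + 1 => SS b k +
      (if 0 ≤ SS b k then (if 0 ≤ b k then (-1 : ℝ) else 1)
       else (if 0 ≤ b k then 1 else -1)) * b k

open Classical in
/-- The greedy sign at step `k`. -/
noncomputable def sg (b : ℕ → ℝ) (k : ℕ) : ℝ :=
  if 0 ≤ SS b k then (if 0 ≤ b k then (-1 : ℝ) else 1)
  else (if 0 ≤ b k then 1 else -1)

lemma SS_succ (b : ℕ → ℝ) (k : ℕ) : SS b (k + 1) = SS b k + sg b k * b k := rfl

lemma sg_pm (b : ℕ → ℝ) (k : ℕ) : sg b k = 1 ∨ sg b k = -1 := by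
  unfold sg; split_ifs <;> simp

lemma sg_mul_nonneg (b : ℕ → ℝ) (k : ℕ) (h : 0 ≤ SS b k) :
    sg b k * b k = -|b k| := by
  unfold sg
  rcases le_or_gt 0 (b k) with hb | hb
  · rw [if_pos h, if_pos hb, abs_of_nonneg hb]; ring
  · rw [if_pos h, if_neg (not_le.mpr hb), abs_of_neg hb]; ring

lemma sg_mul_neg (b : ℕ → ℝ) (k : ℕ) (h : SS b k < 0) :
    sg b k * b k = |b k| := by
  unfold sg
  rcases le_or_gt 0 (b k) with hb | hb
  · rw [if_neg (not_le.mpr h), if_pos hb, abs_of_nonneg hb]; ring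
  · rw [if_neg (not_le.mpr h), if_neg (not_le.mpr hb), abs_of_neg hb]; ring

lemma SS_abs_le (b : ℕ → ℝ) (hb : Summable fun n => |b n|)
    (hdom : ∀ k, |b k| ≤ ∑' n, |b (n + (k + 1))|) :
    ∀ k, |SS b k| ≤ ∑' n, |b (n + k)| := by
  have hshift : ∀ k, Summable fun n => |b (n + k)| :=
    fun k => (summable_nat_add_iff k).2 hb
  have hsplit : ∀ k, (∑' n, |b (n + k)|) = |b k| + ∑' n, |b (n + (k + 1))| := by
    intro k
    rw [Summable.tsum_eq_zero_add (hshift k)]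
    simp only [zero_add]
    congr 1
    apply tsum_congr
    intro n
    congr 2
    omega
  intro k
  induction k with
  | zero =>
      simpa [SS] using abs_nonneg (SS b 0) |>.trans
        (by simpa [SS] using tsum_nonneg (fun n => abs_nonneg (b (n + 0))))
  | succ k ih =>
      have hdk := hdom k
      rw [hsplit k] at ih
      rcases le_or_gt 0 (SS b k) with h | h
      · rw [abs_of_nonneg h] at ih
        rw [SS_succ, sg_mul_nonneg b k h, abs_le]
        constructor
        · have : -|b k| ≤ SS b k := le_trans (neg_nonpos.mpr (abs_nonneg _)) h
          nlinarith [hdk]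
        · linarith
      · rw [abs_of_neg h] at ih
        rw [SS_succ, sg_mul_neg b k h, abs_le]
        constructor
        · linarith
        · nlinarith [hdk]

theorem signs_exist_of_tail_domination (a : ℕ → ℝ)
    (hsum : Summable (fun n => |a n|))
    (hdom : ∀ k : ℕ, 1 ≤ k →
      |a (2 * k - 1) - a (2 * k)| ≤
        ∑' n : ℕ, |a (2 * (n + k + 1) - 1) - a (2 * (n + k + 1))|) :
    ∃ ε : ℕ → ℝ, (∀ i, 1 ≤ i → ε i = 1 ∨ ε i = -1) ∧
      (∀ k : ℕ, 1 ≤ k → ε (2 * k - 1) + ε (2 * k) = 0) ∧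
      ∑' i : ℕ, ε (i + 1) * a (i + 1) = 0 := by
  -- b k is the difference a (2(k+1)-1) - a (2(k+1))
  set b : ℕ → ℝ := fun k => a (2 * k + 1) - a (2 * k + 2) with hbdef
  have hodd : Summable fun k => |a (2 * k + 1)| :=
    hsum.comp_injective (fun x y h => by dsimp only at h; omega : Function.Injective fun k => 2 * k + 1)
  have heven : Summable fun k => |a (2 * k + 2)| :=
    hsum.comp_injective (fun x y h => by dsimp only at h; omega : Function.Injective fun k => 2 * k + 2)
  have hb : Summable fun k => |b k| := by
    apply Summable.of_nonneg_of_le (fun k => abs_nonneg _)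
      (fun k => abs_sub (a (2 * k + 1)) (a (2 * k + 2)))
    exact hodd.add heven
  have hdom' : ∀ k, |b k| ≤ ∑' n, |b (n + (k + 1))| := by
    intro k
    have := hdom (k + 1) (by omega)
    have e1 : 2 * (k + 1) - 1 = 2 * k + 1 := by omega
    have e2 : 2 * (k + 1) = 2 * k + 2 := by omega
    rw [e1, e2] at this
    refine this.trans_eq (tsum_congr fun n => ?_)
    have e3 : 2 * (n + (k + 1) + 1) - 1 = 2 * (n + (k + 1)) + 1 := by omega
    have e4 : 2 * (n + (k + 1) + 1) = 2 * (n + (k + 1)) + 2 := by omega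
    rw [e3, e4]
  -- the partial sums tend to 0
  have hSlim : Filter.Tendsto (fun k => SS b k) Filter.atTop (nhds 0) := by
    have h1 : Filter.Tendsto (fun k => ∑' n, |b (n + k)|) Filter.atTop (nhds 0) :=
      tendsto_sum_nat_add fun n => |b n|
    have h2 : ∀ k, ‖SS b k‖ ≤ ∑' n, |b (n + k)| := fun k =>
      (by simpa using SS_abs_le b hb hdom' k)
    exact squeeze_zero_norm h2 h1
  -- the signed series sums to 0
  have hsb : Summable fun k => sg b k * b k := by
    apply Summable.of_norm
    apply Summable.of_nonneg_of_le (fun k => norm_nonneg _) _ hb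
    intro k
    rcases sg_pm b k with h | h <;> simp [h, Real.norm_eq_abs, abs_mul]
  have hSsum : ∀ k, SS b k = ∑ i ∈ Finset.range k, sg b i * b i := by
    intro k
    induction k with
    | zero => simp [SS]
    | succ k ih => rw [SS_succ, ih, Finset.sum_range_succ]
  have hzero : ∑' k, sg b k * b k = 0 := by
    have := hsb.hasSum.tendsto_sum_nat
    have heq : Filter.Tendsto (fun k => ∑ i ∈ Finset.range k, sg b i * b i)
        Filter.atTop (nhds 0) := by
      apply hSlim.congr
      intro k; exact hSsum k
    exact tendsto_nhds_unique this heq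
  -- define the signs
  refine ⟨fun i => if i % 2 = 1 then sg b (i / 2) else -sg b (i / 2 - 1), ?_, ?_, ?_⟩
  · intro i _
    by_cases h : i % 2 = 1
    · simpa [h] using sg_pm b (i / 2)
    · rcases sg_pm b (i / 2 - 1) with hs | hs <;> simp [h, hs]
  · intro k hk
    obtain ⟨m, rfl⟩ : ∃ m, k = m + 1 := ⟨k - 1, by omega⟩
    have e1 : 2 * (m + 1) - 1 = 2 * m + 1 := by omega
    have e2 : (2 * m + 1) % 2 = 1 := by omega
    have e3 : (2 * m + 1) / 2 = m := by omega
    have e4 : (2 * (m + 1)) % 2 = 0 := by omega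
    have e5 : 2 * (m + 1) / 2 - 1 = m := by omega
    rw [e1]
    simp only [e2, e3, e4, e5]
    norm_num
  · -- compute the tsum by pairing
    set ε : ℕ → ℝ := fun i => if i % 2 = 1 then sg b (i / 2) else -sg b (i / 2 - 1)
      with hε
    set g : ℕ → ℝ := fun i => ε (i + 1) * a (i + 1) with hg
    have hge : ∀ k, g (2 * k) = sg b k * a (2 * k + 1) := by
      intro k
      have e2 : (2 * k + 1) % 2 = 1 := by omega
      have e3 : (2 * k + 1) / 2 = k := by omega
      simp only [hg, hε, e2, e3, if_pos]
    have hgo : ∀ k, g (2 * k + 1) = -(sg b k * a (2 * k + 2)) := by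
      intro k
      have e2 : (2 * k + 2) % 2 = 0 := by omega
      have e3 : (2 * k + 2) / 2 - 1 = k := by omega
      simp only [hg, hε]
      rw [if_neg (by omega), e3]
      ring
    have hso : Summable fun k => sg b k * a (2 * k + 1) := by
      apply Summable.of_norm
      apply Summable.of_nonneg_of_le (fun k => norm_nonneg _) _ hodd
      intro k
      rcases sg_pm b k with h | h <;> simp [h, Real.norm_eq_abs, abs_mul]
    have hse : Summable fun k => sg b k * a (2 * k + 2) := by
      apply Summable.of_norm
      apply Summable.of_nonneg_of_le (fun k => norm_nonneg _) _ heven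
      intro k
      rcases sg_pm b k with h | h <;> simp [h, Real.norm_eq_abs, abs_mul]
    have he : Summable fun k => g (2 * k) := by
      apply hso.congr; intro k; rw [hge]
    have ho : Summable fun k => g (2 * k + 1) := by
      apply hse.neg.congr; intro k; rw [hgo]
    rw [← tsum_even_add_odd he ho]
    have t1 : ∑' k, g (2 * k) = ∑' k, sg b k * a (2 * k + 1) :=
      tsum_congr hge
    have t2 : ∑' k, g (2 * k + 1) = -∑' k, sg b k * a (2 * k + 2) := by
      rw [← tsum_neg]; exact tsum_congr hgo
    rw [t1, t2]
    have : ∑' k, sg b k * a (2 * k + 1) - ∑' k, sg b k * a (2 * k + 2)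
        = ∑' k, sg b k * b k := by
      rw [← Summable.tsum_sub hso hse]
      apply tsum_congr
      intro k
      simp only [hbdef]; ring
    linarith [hzero, this]
end

section
/- Let (b_k) be a sequence of nonnegative real numbers with ∑ b_k < ∞ such that b_k ≤ ∑_{n=k+1}^∞ b_n for every k. Then there exists a sequence of signs (δ_k) ∈ {1,-1}^ℕ with ∑_{k=1}^∞ δ_k b_k = 0. -/
noncomputable def tdS (b : ℕ → ℝ) : ℕ → ℝ
  | 0 => 0
  | n + 1 => tdS b n + (if 0 ≤ tdS b n then (-1 : ℝ) else 1) * b n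

theorem signs_exist_of_nonneg_tail_domination (b : ℕ → ℝ)
    (hnonneg : ∀ k, 0 ≤ b k) (hsum : Summable b)
    (hdom : ∀ k : ℕ, b k ≤ ∑' n : ℕ, b (n + k + 1)) :
    ∃ δ : ℕ → ℝ, (∀ k, δ k = 1 ∨ δ k = -1) ∧
      ∑' k : ℕ, δ k * b k = 0 := by
  set δ : ℕ → ℝ := fun k => if 0 ≤ tdS b k then (-1 : ℝ) else 1 with hδ
  set T : ℕ → ℝ := fun n => ∑' j : ℕ, b (j + n + 1) with hT
  have hsumT : ∀ n : ℕ, Summable fun j => b (j + n + 1) := fun n =>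
    (summable_nat_add_iff (n + 1)).2 hsum
  have hTnonneg : ∀ n, 0 ≤ T n := fun n =>
    tsum_nonneg fun j => hnonneg _
  have hSdef : ∀ n, tdS b n = ∑ k ∈ Finset.range n, δ k * b k := by
    intro n
    induction n with
    | zero => simp [tdS]
    | succ n ih =>
      rw [Finset.sum_range_succ, ← ih]
      simp [tdS, hδ]
  have Trec : ∀ n, T n = b (n + 1) + T (n + 1) := by
    intro n
    have h := Summable.tsum_eq_zero_add (hsumT n)
    simp only [zero_add] at h
    simp only [hT]
    rw [h]
    congr 1
    apply tsum_congr
    intro j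
    congr 1
    omega
  have key : ∀ n, -T n ≤ tdS b (n + 1) ∧ tdS b (n + 1) ≤ T n := by
    intro n
    induction n with
    | zero =>
      have h0 : tdS b 1 = -b 0 := by simp [tdS]
      have hd := hdom 0
      have : T 0 = ∑' j : ℕ, b (j + 0 + 1) := rfl
      constructor
      · rw [h0]; linarith [hnonneg 0, hTnonneg 0]
      · rw [h0]; linarith [hnonneg 0, hTnonneg 0]
    | succ n ih =>
      have hrec : tdS b (n + 2) = tdS b (n + 1) +
          (if 0 ≤ tdS b (n + 1) then (-1 : ℝ) else 1) * b (n + 1) := rfl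
      have hd := hdom (n + 1)
      have hd' : b (n + 1) ≤ T (n + 1) := hd
      have htr := Trec n
      split_ifs at hrec with h
      · constructor
        · rw [hrec]; linarith
        · rw [hrec]; linarith [ih.2]
      · push_neg at h
        constructor
        · rw [hrec]; linarith [ih.1]
        · rw [hrec]; linarith
  have hT0 : Filter.Tendsto T Filter.atTop (nhds 0) := by
    have h1 : Filter.Tendsto (fun i : ℕ => ∑' k : ℕ, b (k + i)) Filter.atTop (nhds 0) :=
      tendsto_sum_nat_add b
    have h2 : Filter.Tendsto (fun n : ℕ => n + 1) Filter.atTop Filter.atTop :=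
      Filter.tendsto_add_atTop_nat 1
    exact h1.comp h2
  have hS0' : Filter.Tendsto (fun n => tdS b (n + 1)) Filter.atTop (nhds 0) := by
    have hneg : Filter.Tendsto (fun n => -T n) Filter.atTop (nhds 0) := by
      simpa using hT0.neg
    exact tendsto_of_tendsto_of_tendsto_of_le_of_le hneg hT0
      (fun n => (key n).1) (fun n => (key n).2)
  have hS0 : Filter.Tendsto (tdS b) Filter.atTop (nhds 0) :=
    (Filter.tendsto_add_atTop_iff_nat 1).1 hS0'
  have hsumδ : Summable fun k => δ k * b k := by
    apply Summable.of_norm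
    have : (fun k => ‖δ k * b k‖) = b := by
      funext k
      simp only [hδ, norm_mul]
      split_ifs with h <;> simp [abs_of_nonneg (hnonneg k)]
    rw [this]; exact hsum
  refine ⟨δ, fun k => ?_, ?_⟩
  · simp only [hδ]; split_ifs <;> [right; left] <;> rfl
  · have hhs : HasSum (fun k => δ k * b k) 0 := by
      rw [hsumδ.hasSum_iff_tendsto_nat]
      have : (fun n => ∑ i ∈ Finset.range n, δ i * b i) = tdS b := by
        funext n; exact (hSdef n).symm
      rw [this]; exact hS0
    exact hhs.tsum_eq
end

section
/- There is no sequence (ε_i) ∈ {1,-1}^ℕ with period N < 6 such that ∑_{i=1}^N ε_i = 0 and ∑_{i=1}^N ε_i q^i = 0 for some q ∈ (0,1). In other words, the shortest period of a balanced ±-polynomial with a root in (0,1) is 6. -/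
theorem shortest_balanced_period_is_six :
    (∀ N : ℕ, 1 ≤ N → N < 6 → ∀ ε : ℕ → ℝ, (∀ i, ε i = 1 ∨ ε i = -1) →
      ∀ q : ℝ, q ∈ Set.Ioo (0 : ℝ) 1 →
        ∑ i ∈ Finset.Icc 1 N, ε i = 0 → ∑ i ∈ Finset.Icc 1 N, ε i * q ^ i ≠ 0) ∧
    (∃ ε : ℕ → ℝ, (∀ i, ε i = 1 ∨ ε i = -1) ∧ ∃ q ∈ Set.Ioo (0 : ℝ) 1,
      ∑ i ∈ Finset.Icc 1 6, ε i = 0 ∧ ∑ i ∈ Finset.Icc 1 6, ε i * q ^ i = 0) := by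
  constructor
  · intro N h1 h6 ε hε q hq hsum
    obtain ⟨hq0, hq1⟩ := hq
    have h1q : (0:ℝ) < 1 - q := by linarith
    have ha : (0:ℝ) < q * (1 - q) := mul_pos hq0 h1q
    interval_cases N
    · rw [show Finset.Icc 1 1 = ({1} : Finset ℕ) from by decide] at hsum ⊢
      rcases hε 1 with h | h <;> norm_num [h] at hsum
    · rw [show Finset.Icc 1 2 = ({1, 2} : Finset ℕ) from by decide] at hsum ⊢
      norm_num [Finset.sum_insert, Finset.mem_insert] at hsum ⊢
      rcases hε 1 with h1' | h1' <;> rcases hε 2 with h2' | h2' <;>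
        rw [h1', h2'] at hsum ⊢ <;>
        first
          | (exfalso; norm_num at hsum; done)
          | (intro hc; nlinarith [ha, mul_pos ha hq0, mul_pos ha (mul_pos hq0 hq0),
              mul_pos (mul_pos ha h1q) (by linarith : (0:ℝ) < 1 + q), mul_pos ha h1q])
    · rw [show Finset.Icc 1 3 = ({1, 2, 3} : Finset ℕ) from by decide] at hsum ⊢
      norm_num [Finset.sum_insert, Finset.mem_insert] at hsum ⊢
      rcases hε 1 with h1' | h1' <;> rcases hε 2 with h2' | h2' <;> rcases hε 3 with h3' | h3' <;>
        rw [h1', h2', h3'] at hsum <;> norm_num at hsum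
    · rw [show Finset.Icc 1 4 = ({1, 2, 3, 4} : Finset ℕ) from by decide] at hsum ⊢
      norm_num [Finset.sum_insert, Finset.mem_insert] at hsum ⊢
      rcases hε 1 with h1' | h1' <;> rcases hε 2 with h2' | h2' <;> rcases hε 3 with h3' | h3' <;>
        rcases hε 4 with h4' | h4' <;> rw [h1', h2', h3', h4'] at hsum ⊢ <;>
        first
          | (exfalso; norm_num at hsum; done)
          | (intro hc; nlinarith [ha, mul_pos ha hq0, mul_pos ha (mul_pos hq0 hq0),
              mul_pos (mul_pos ha h1q) (by linarith : (0:ℝ) < 1 + q), mul_pos ha h1q])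
    · rw [show Finset.Icc 1 5 = ({1, 2, 3, 4, 5} : Finset ℕ) from by decide] at hsum ⊢
      norm_num [Finset.sum_insert, Finset.mem_insert] at hsum ⊢
      rcases hε 1 with h1' | h1' <;> rcases hε 2 with h2' | h2' <;> rcases hε 3 with h3' | h3' <;>
        rcases hε 4 with h4' | h4' <;> rcases hε 5 with h5' | h5' <;>
        rw [h1', h2', h3', h4', h5'] at hsum <;> norm_num at hsum
  · refine ⟨fun i => if i = 2 ∨ i = 3 ∨ i = 4 then -1 else 1, ?_,
      (Real.sqrt 5 - 1) / 2, ⟨?_, ?_⟩, ?_, ?_⟩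
    · intro i; by_cases h : i = 2 ∨ i = 3 ∨ i = 4 <;> simp [h]
    · have h5 : Real.sqrt 5 ^ 2 = 5 := Real.sq_sqrt (by norm_num)
      nlinarith [Real.sqrt_nonneg 5]
    · have h5 : Real.sqrt 5 ^ 2 = 5 := Real.sq_sqrt (by norm_num)
      nlinarith [Real.sqrt_nonneg 5]
    · rw [show Finset.Icc 1 6 = ({1, 2, 3, 4, 5, 6} : Finset ℕ) from by decide]
      norm_num [Finset.sum_insert, Finset.mem_insert]
    · rw [show Finset.Icc 1 6 = ({1, 2, 3, 4, 5, 6} : Finset ℕ) from by decide]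
      norm_num [Finset.sum_insert, Finset.mem_insert]
      have h5 : Real.sqrt 5 ^ 2 = 5 := Real.sq_sqrt (by norm_num)
      have hp : ((Real.sqrt 5 - 1) / 2) ^ 2 + (Real.sqrt 5 - 1) / 2 - 1 = 0 := by
        linear_combination h5 / 4
      linear_combination (((Real.sqrt 5 - 1) / 2) ^ 4 - (Real.sqrt 5 - 1) / 2) * hp
end
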